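/- arXiv:1206.4910 — 3 statements merged into one kernel-verified Lean document; each statement's English description precedes it below -/
import Mathlib

section
/- Let n, k ≥ 1, let M' be an invertible real (n+k)×(n+k) upper triangular matrix, and set W' = (M')ᵀM'. Let N be the leading principal n×n submatrix of M' and set W = NᵀN. Let μ' ∈ ℝ^{n+k}, let μ ∈ ℝⁿ consist of the first n coordinates of μ', let z' = ((M')ᵀ)⁻¹μ', and let g ∈ ℝᵏ consist of the last k coordinates of z'. Then (μ')ᵀ(W')⁻¹μ' − μᵀW⁻¹μ = ‖g‖², where ‖·‖ is the Euclidean norm on ℝᵏ. -/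
open Matrix

lemma stmt8_aux {m : Type*} [Fintype m] [DecidableEq m] (A : Matrix m m ℝ)
    (hA : IsUnit A.det) (μ : m → ℝ) :
    μ ⬝ᵥ ((Aᵀ * A)⁻¹ *ᵥ μ) = ((Aᵀ)⁻¹ *ᵥ μ) ⬝ᵥ ((Aᵀ)⁻¹ *ᵥ μ) := by
  have hAT : IsUnit Aᵀ.det := by rwa [Matrix.det_transpose]
  obtain ⟨z, hzdef⟩ : ∃ z, z = (Aᵀ)⁻¹ *ᵥ μ := ⟨_, rfl⟩
  rw [← hzdef]
  have hz : Aᵀ *ᵥ z = μ := by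
    rw [hzdef, Matrix.mulVec_mulVec, Matrix.mul_nonsing_inv _ hAT, Matrix.one_mulVec]
  have hid : A * ((Aᵀ * A)⁻¹ * Aᵀ) = 1 := by
    rw [Matrix.mul_inv_rev, Matrix.mul_assoc, Matrix.nonsing_inv_mul _ hAT,
      Matrix.mul_one, Matrix.mul_nonsing_inv _ hA]
  conv_lhs => rw [← hz]
  rw [Matrix.mulVec_mulVec, Matrix.mulVec_transpose, ← Matrix.dotProduct_mulVec,
    Matrix.mulVec_mulVec, hid, Matrix.one_mulVec]

theorem stmt8 (n k : ℕ) (hn : 1 ≤ n) (hk : 1 ≤ k)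
    (M' : Matrix (Fin (n + k)) (Fin (n + k)) ℝ) (hMinv : IsUnit M'.det)
    (hMtri : ∀ i i' : Fin (n + k), i' < i → M' i i' = 0)
    (μ' : Fin (n + k) → ℝ) :
    let N := M'.submatrix (Fin.castAdd k) (Fin.castAdd k)
    let W' := M'ᵀ * M'
    let W := Nᵀ * N
    let μ : Fin n → ℝ := fun i => μ' (Fin.castAdd k i)
    let z' := (M'ᵀ)⁻¹ *ᵥ μ'
    let g : EuclideanSpace ℝ (Fin k) := WithLp.toLp 2 (fun i => z' (Fin.natAdd n i))
    μ' ⬝ᵥ (W'⁻¹ *ᵥ μ') - μ ⬝ᵥ (W⁻¹ *ᵥ μ) = ‖g‖ ^ 2 := by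
  intro N W' W μ z' g
  have hMT : IsUnit M'ᵀ.det := by rwa [Matrix.det_transpose]
  -- determinant facts
  have hMdet : M'.det = ∏ i, M' i i :=
    Matrix.det_of_upperTriangular (fun i j h => hMtri i j h)
  have hNtri : ∀ i j : Fin n, j < i → N i j = 0 := by
    intro i j h
    exact hMtri _ _ (by rw [Fin.lt_def, Fin.coe_castAdd, Fin.coe_castAdd]; exact h)
  have hNdet : N.det = ∏ i : Fin n, N i i :=
    Matrix.det_of_upperTriangular (fun i j h => hNtri i j h)
  have hdiag : ∀ i : Fin (n + k), M' i i ≠ 0 := by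
    have := hMinv.ne_zero
    rw [hMdet] at this
    exact fun i => Finset.prod_ne_zero_iff.mp this i (Finset.mem_univ i)
  have hNinv : IsUnit N.det := by
    rw [isUnit_iff_ne_zero, hNdet]
    exact Finset.prod_ne_zero_iff.mpr fun i _ => hdiag _
  have hNT : IsUnit Nᵀ.det := by rwa [Matrix.det_transpose]
  -- z restricted
  set z : Fin n → ℝ := fun i => z' (Fin.castAdd k i) with hzdef
  have hz' : M'ᵀ *ᵥ z' = μ' := by
    rw [show z' = (M'ᵀ)⁻¹ *ᵥ μ' from rfl, Matrix.mulVec_mulVec,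
      Matrix.mul_nonsing_inv _ hMT, Matrix.one_mulVec]
  have hNz : Nᵀ *ᵥ z = μ := by
    funext i
    have := congrFun hz' (Fin.castAdd k i)
    rw [Matrix.mulVec, dotProduct] at this
    rw [Fin.sum_univ_add] at this
    have hzero : ∀ j : Fin k,
        M'ᵀ (Fin.castAdd k i) (Fin.natAdd n j) * z' (Fin.natAdd n j) = 0 := by
      intro j
      rw [Matrix.transpose_apply, hMtri _ _ (by simp [Fin.lt_def]; omega), zero_mul]
    rw [Finset.sum_congr rfl (fun j _ => hzero j), Finset.sum_const_zero, add_zero] at this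
    show ∑ j, Nᵀ i j * z j = μ i
    simpa [N, Matrix.transpose_apply, Matrix.submatrix_apply, z] using this
  have hzN : (Nᵀ)⁻¹ *ᵥ μ = z := by
    rw [← hNz, Matrix.mulVec_mulVec, Matrix.nonsing_inv_mul _ hNT, Matrix.one_mulVec]
  have h1 : μ' ⬝ᵥ (W'⁻¹ *ᵥ μ') = z' ⬝ᵥ z' := stmt8_aux M' hMinv μ'
  have h2 : μ ⬝ᵥ (W⁻¹ *ᵥ μ) = z ⬝ᵥ z := by
    rw [show W = Nᵀ * N from rfl, stmt8_aux N hNinv μ, hzN]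
  rw [h1, h2]
  have hsplit : z' ⬝ᵥ z' = z ⬝ᵥ z + ∑ j : Fin k, z' (Fin.natAdd n j) ^ 2 := by
    simp only [dotProduct, Fin.sum_univ_add, z, pow_two]
  have hnorm : ‖g‖ ^ 2 = ∑ j : Fin k, z' (Fin.natAdd n j) ^ 2 := by
    rw [EuclideanSpace.norm_eq, Real.sq_sqrt (by positivity)]
    simp [Real.norm_eq_abs, sq_abs, g]
  rw [hsplit, hnorm]
  ring
end

section
/- Let n, k ≥ 1, let s > 0, and let ξ₁, …, ξ_{n+k} > 0. Let M' be a real (n+k)×(n+k) upper triangular matrix with strictly positive diagonal entries, set W' = (M')ᵀM', let N be the leading principal n×n submatrix of M', and set W = NᵀN. Let Ξ' be the diagonal (n+k)×(n+k) matrix with diagonal entries ξ₁², …, ξ_{n+k}², and let Ξ be the diagonal n×n matrix with diagonal entries ξ₁², …, ξₙ². Let μ' ∈ ℝ^{n+k}, let μ ∈ ℝⁿ consist of the first n coordinates of μ', let z' = ((M')ᵀ)⁻¹μ', and let g ∈ ℝᵏ consist of the last k coordinates of z'. Define B = [exp((1/2)(μ')ᵀ(W')⁻¹μ')/√(det(s²W'Ξ'))]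 / [exp((1/2)μᵀW⁻¹μ)/√(det(s²WΞ))]. Then 2 log B = ‖g‖² − 2 ∑_{i=n+1}^{n+k} log(s ξᵢ M'_{i,i}). -/
open Matrix

theorem quadform_aux (m : ℕ) (A : Matrix (Fin m) (Fin m) ℝ) (hA : IsUnit A.det)
    (μ : Fin m → ℝ) :
    μ ⬝ᵥ ((Aᵀ * A)⁻¹ *ᵥ μ) = ((Aᵀ)⁻¹ *ᵥ μ) ⬝ᵥ ((Aᵀ)⁻¹ *ᵥ μ) := by
  have hAT : IsUnit Aᵀ.det := by rwa [det_transpose]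
  set z := (Aᵀ)⁻¹ *ᵥ μ with hz
  have hμ : μ = Aᵀ *ᵥ z := by
    rw [hz, Matrix.mulVec_mulVec, Matrix.mul_nonsing_inv _ hAT, Matrix.one_mulVec]
  rw [Matrix.mul_inv_rev, show ((A⁻¹ * Aᵀ⁻¹) *ᵥ μ) = A⁻¹ *ᵥ z by
    rw [hz, Matrix.mulVec_mulVec]]
  conv_lhs => rw [hμ, Matrix.mulVec_transpose]
  rw [← Matrix.dotProduct_mulVec, Matrix.mulVec_mulVec, Matrix.mul_nonsing_inv _ hA,
    Matrix.one_mulVec]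

theorem detcalc_aux (m : ℕ) (s : ℝ) (ξ : Fin m → ℝ)
    (A : Matrix (Fin m) (Fin m) ℝ) (hdet : A.det = ∏ i, A i i) :
    (s ^ 2 • ((Aᵀ * A) * Matrix.diagonal fun i => ξ i ^ 2)).det
      = (∏ i, (s * ξ i * A i i)) ^ 2 := by
  rw [Matrix.det_smul, Matrix.det_mul, Matrix.det_mul, Matrix.det_transpose,
    Matrix.det_diagonal, hdet, ← Finset.prod_pow,
    Finset.prod_congr rfl
      (fun i _ => show (s * ξ i * A i i) ^ 2 = s ^ 2 * ((A i i) ^ 2 * ξ i ^ 2) by ring),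
    Finset.prod_mul_distrib, Finset.prod_mul_distrib, Finset.prod_const, Finset.card_univ,
    ← sq, ← Finset.prod_pow]

theorem stmt9 (n k : ℕ) (hn : 1 ≤ n) (hk : 1 ≤ k)
    (s : ℝ) (hs : 0 < s) (ξ : Fin (n + k) → ℝ) (hξ : ∀ i, 0 < ξ i)
    (M' : Matrix (Fin (n + k)) (Fin (n + k)) ℝ)
    (hMtri : ∀ i i' : Fin (n + k), i' < i → M' i i' = 0)
    (hMdiag : ∀ i, 0 < M' i i)
    (μ' : Fin (n + k) → ℝ) :
    let W' := M'ᵀ * M'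
    let N := M'.submatrix (Fin.castAdd k) (Fin.castAdd k)
    let W := Nᵀ * N
    let Ξ' := Matrix.diagonal fun i => ξ i ^ 2
    let Ξ := Matrix.diagonal fun i : Fin n => ξ (Fin.castAdd k i) ^ 2
    let μ : Fin n → ℝ := fun i => μ' (Fin.castAdd k i)
    let z' := (M'ᵀ)⁻¹ *ᵥ μ'
    let g : EuclideanSpace ℝ (Fin k) := WithLp.toLp 2 (fun i => z' (Fin.natAdd n i))
    let B := (Real.exp ((1 / 2) * (μ' ⬝ᵥ (W'⁻¹ *ᵥ μ'))) /
        Real.sqrt ((s ^ 2 • (W' * Ξ')).det)) /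
      (Real.exp ((1 / 2) * (μ ⬝ᵥ (W⁻¹ *ᵥ μ))) /
        Real.sqrt ((s ^ 2 • (W * Ξ)).det))
    2 * Real.log B =
      ‖g‖ ^ 2 - 2 * ∑ i : Fin k,
        Real.log (s * ξ (Fin.natAdd n i) * M' (Fin.natAdd n i) (Fin.natAdd n i)) := by
  intro W' N W Ξ' Ξ μ z' g B
  -- triangularity and determinants
  have hMtriB : M'.BlockTriangular id := fun i j h => hMtri i j h
  have hdetM' : M'.det = ∏ i, M' i i := det_of_upperTriangular hMtriB
  have hMunit : IsUnit M'.det := by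
    rw [hdetM']; exact (Finset.prod_pos fun i _ => hMdiag i).ne'.isUnit
  have hNtri : N.BlockTriangular id := fun i j h => hMtri _ _ (show Fin.castAdd k j < Fin.castAdd k i from Fin.lt_def.mpr (Fin.lt_def.mp h))
  have hdetN : N.det = ∏ i, N i i := det_of_upperTriangular hNtri
  have hNunit : IsUnit N.det := by
    rw [hdetN]; exact (Finset.prod_pos fun i _ => hMdiag _).ne'.isUnit
  have hNTunit : IsUnit (Nᵀ).det := by rwa [det_transpose]
  have hMTunit : IsUnit (M'ᵀ).det := by rwa [det_transpose]
  -- first n coordinates of z'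
  have hzfirst : (Nᵀ)⁻¹ *ᵥ μ = fun i => z' (Fin.castAdd k i) := by
    have hμeq : M'ᵀ *ᵥ z' = μ' := by
      rw [Matrix.mulVec_mulVec, Matrix.mul_nonsing_inv _ hMTunit, Matrix.one_mulVec]
    have key : Nᵀ *ᵥ (fun i => z' (Fin.castAdd k i)) = μ := by
      funext i
      have h1 := congrFun hμeq (Fin.castAdd k i)
      simp only [Matrix.mulVec, dotProduct] at h1 ⊢
      rw [show μ i = μ' (Fin.castAdd k i) from rfl, ← h1, Fin.sum_univ_add]
      have hzero : ∀ j : Fin k,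
          M'ᵀ (Fin.castAdd k i) (Fin.natAdd n j) * z' (Fin.natAdd n j) = 0 := by
        intro j
        rw [Matrix.transpose_apply, hMtri _ _ (by simp [Fin.lt_def]; omega), zero_mul]
      rw [Finset.sum_congr rfl (fun j _ => hzero j), Finset.sum_const, smul_zero, add_zero]
      rfl
    rw [← key, Matrix.mulVec_mulVec, Matrix.nonsing_inv_mul _ hNTunit, Matrix.one_mulVec]
  -- quadratic forms
  have hq' : μ' ⬝ᵥ (W'⁻¹ *ᵥ μ') = ∑ i : Fin (n + k), z' i * z' i := by
    rw [show (μ' ⬝ᵥ (W'⁻¹ *ᵥ μ')) = z' ⬝ᵥ z' from quadform_aux _ _ hMunit μ']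
    rfl
  have hq : μ ⬝ᵥ (W⁻¹ *ᵥ μ) = ∑ i : Fin n, z' (Fin.castAdd k i) * z' (Fin.castAdd k i) := by
    rw [show (μ ⬝ᵥ (W⁻¹ *ᵥ μ)) = ((Nᵀ)⁻¹ *ᵥ μ) ⬝ᵥ ((Nᵀ)⁻¹ *ᵥ μ) from quadform_aux _ _ hNunit μ,
      hzfirst]
    rfl
  -- determinants
  have hd' : (s ^ 2 • (W' * Ξ')).det = (∏ i, (s * ξ i * M' i i)) ^ 2 :=
    detcalc_aux _ s ξ M' hdetM'
  have hd : (s ^ 2 • (W * Ξ)).det =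
      (∏ i : Fin n, (s * ξ (Fin.castAdd k i) * M' (Fin.castAdd k i) (Fin.castAdd k i))) ^ 2 :=
    detcalc_aux _ s (fun i => ξ (Fin.castAdd k i)) N hdetN
  have hfac : ∀ i, 0 < s * ξ i * M' i i := fun i => mul_pos (mul_pos hs (hξ i)) (hMdiag i)
  set P' := ∏ i, (s * ξ i * M' i i) with hP'
  set P := ∏ i : Fin n, (s * ξ (Fin.castAdd k i) * M' (Fin.castAdd k i) (Fin.castAdd k i))
    with hP
  have hP'pos : 0 < P' := Finset.prod_pos fun i _ => hfac i
  have hPpos : 0 < P := Finset.prod_pos fun i _ => hfac _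
  -- log of B
  have hBval : B = Real.exp ((1 / 2) * (μ' ⬝ᵥ (W'⁻¹ *ᵥ μ'))) / P' /
      (Real.exp ((1 / 2) * (μ ⬝ᵥ (W⁻¹ *ᵥ μ))) / P) := by
    rw [show B = (Real.exp ((1 / 2) * (μ' ⬝ᵥ (W'⁻¹ *ᵥ μ'))) /
        Real.sqrt ((s ^ 2 • (W' * Ξ')).det)) /
      (Real.exp ((1 / 2) * (μ ⬝ᵥ (W⁻¹ *ᵥ μ))) /
        Real.sqrt ((s ^ 2 • (W * Ξ)).det)) from rfl,
      hd', hd, Real.sqrt_sq hP'pos.le, Real.sqrt_sq hPpos.le]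
  have hlogB : Real.log B = (1 / 2) * (μ' ⬝ᵥ (W'⁻¹ *ᵥ μ')) - Real.log P' -
      ((1 / 2) * (μ ⬝ᵥ (W⁻¹ *ᵥ μ)) - Real.log P) := by
    rw [hBval, Real.log_div (div_ne_zero (Real.exp_ne_zero _) hP'pos.ne')
        (div_ne_zero (Real.exp_ne_zero _) hPpos.ne'),
      Real.log_div (Real.exp_ne_zero _) hP'pos.ne',
      Real.log_div (Real.exp_ne_zero _) hPpos.ne', Real.log_exp, Real.log_exp]
  -- logs of products
  have hlogP' : Real.log P' = (∑ i : Fin n,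
        Real.log (s * ξ (Fin.castAdd k i) * M' (Fin.castAdd k i) (Fin.castAdd k i))) +
      ∑ i : Fin k, Real.log (s * ξ (Fin.natAdd n i) * M' (Fin.natAdd n i) (Fin.natAdd n i)) := by
    rw [hP', Real.log_prod (fun i _ => (hfac i).ne'), Fin.sum_univ_add]
  have hlogP : Real.log P = ∑ i : Fin n,
      Real.log (s * ξ (Fin.castAdd k i) * M' (Fin.castAdd k i) (Fin.castAdd k i)) := by
    rw [hP, Real.log_prod (fun i _ => (hfac _).ne')]
  -- norm of g
  have hg : ‖g‖ ^ 2 = ∑ i : Fin k, z' (Fin.natAdd n i) * z' (Fin.natAdd n i) := by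
    rw [EuclideanSpace.norm_eq, Real.sq_sqrt (Finset.sum_nonneg fun i _ => sq_nonneg _)]
    exact Finset.sum_congr rfl fun i _ => by
      rw [Real.norm_eq_abs, sq_abs, sq]
  -- split the full sum
  have hsplit : ∑ i : Fin (n + k), z' i * z' i =
      (∑ i : Fin n, z' (Fin.castAdd k i) * z' (Fin.castAdd k i)) +
      ∑ i : Fin k, z' (Fin.natAdd n i) * z' (Fin.natAdd n i) :=
    Fin.sum_univ_add _
  rw [hlogB, hq', hq, hsplit, hlogP', hlogP, hg]
  ring
end

section
/- Let Λ : ℝ → ℝ be defined by Λ(x) = 2x for x ∈ [0, 1/2), Λ(x) = 2(1 − x) for x ∈ [1/2, 1], and Λ(x) = 0 otherwise. Define the 1-periodic Schauder system by ψ₁ ≡ 1 and, for j ≥ 1 and k = 1, …, 2^{j−1}, ψ_{2^{j−1}+k}(x) = Λ(2^{j−1}(x mod 1) − k + 1). Then for every j ≥ 1, the number of pairs (l, l') with 1 ≤ l ≤ l' ≤ 2^{j−1} such that the product function x ↦ ψ_l(x)ψ_{l'}(x) is not identically zero on [0, 1) equals 2^{j−1}(j − 1) + 1. -/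
/-- The "hat" function: `Λ(x) = 2x` on `[0, 1/2)`, `Λ(x) = 2(1-x)` on `[1/2, 1]`,
and `Λ(x) = 0` otherwise. -/
noncomputable def hatLam (x : ℝ) : ℝ :=
  if 0 ≤ x ∧ x < 1 / 2 then 2 * x
  else if 1 / 2 ≤ x ∧ x ≤ 1 then 2 * (1 - x)
  else 0

namespace Stmt13

lemma hatLam_ne (y : ℝ) : hatLam y ≠ 0 ↔ 0 < y ∧ y < 1 := by
  unfold hatLam
  split_ifs with h1 h2
  · constructor
    · intro h
      exact ⟨h1.1.lt_of_ne fun e => h (by rw [← e]; ring), by linarith [h1.2]⟩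
    · rintro ⟨hy, _⟩
      positivity
  · constructor
    · intro h
      refine ⟨by linarith [h2.1], lt_of_le_of_ne h2.2 fun e => h (by rw [e]; ring)⟩
    · rintro ⟨_, hy⟩
      have : (0:ℝ) < 2 * (1 - y) := by linarith
      exact this.ne'
  · constructor
    · intro h; exact absurd rfl h
    · rintro ⟨hy0, hy1⟩
      by_cases hc : y < 1 / 2
      · exact absurd ⟨hy0.le, hc⟩ h1
      · exact absurd ⟨not_lt.mp hc, hy1.le⟩ h2

/-- level-depth of index `m ≥ 2`. -/
def L (m : ℕ) : ℕ := Nat.log 2 (m - 1)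
/-- position of index `m ≥ 2` within its level. -/
def K (m : ℕ) : ℕ := m - 2 ^ L m

lemma L_bounds {m : ℕ} (hm : 2 ≤ m) : 2 ^ L m ≤ m - 1 ∧ m - 1 < 2 ^ (L m + 1) :=
  ⟨Nat.pow_log_le_self 2 (by omega), Nat.lt_pow_succ_log_self one_lt_two _⟩

lemma K_pos {m : ℕ} (hm : 2 ≤ m) : 1 ≤ K m := by
  have h := (L_bounds hm).1; unfold K; omega

lemma K_le {m : ℕ} (hm : 2 ≤ m) : K m ≤ 2 ^ L m := by
  have h := (L_bounds hm).2
  have h2 : 2 ^ (L m + 1) = 2 * 2 ^ L m := by rw [pow_succ]; ring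
  unfold K; omega

lemma LK_sum {m : ℕ} (hm : 2 ≤ m) : 2 ^ L m + K m = m := by
  have h := (L_bounds hm).1; unfold K; omega

lemma LK_eq {e k : ℕ} (hk1 : 1 ≤ k) (hk2 : k ≤ 2 ^ e) :
    L (2 ^ e + k) = e ∧ K (2 ^ e + k) = k := by
  have h2 : 2 ^ (e + 1) = 2 * 2 ^ e := by rw [pow_succ]; ring
  have hL : L (2 ^ e + k) = e :=
    Nat.log_eq_of_pow_le_of_lt_pow (by omega) (by omega)
  refine ⟨hL, ?_⟩
  unfold K; rw [hL]; omega

lemma L_mono {l l' : ℕ} (h : l ≤ l') : L l ≤ L l' :=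
  Nat.log_mono_right (by omega)

lemma pow_split {e f : ℕ} (hef : e ≤ f) : (2:ℝ) ^ f = 2 ^ (f - e) * 2 ^ e := by
  rw [← pow_add]; congr 1; omega

lemma lt1 {e f a b : ℕ} (hef : e ≤ f) :
    (a:ℝ) / 2 ^ e < (b:ℝ) / 2 ^ f ↔ a * 2 ^ (f - e) < b := by
  rw [div_lt_div_iff₀ (by positivity) (by positivity), pow_split hef, ← mul_assoc,
    mul_lt_mul_iff_left₀ (by positivity : (0:ℝ) < 2 ^ e)]
  exact_mod_cast Iff.rfl

lemma lt2 {e f a b : ℕ} (hef : e ≤ f) :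
    (a:ℝ) / 2 ^ f < (b:ℝ) / 2 ^ e ↔ a < b * 2 ^ (f - e) := by
  rw [div_lt_div_iff₀ (by positivity) (by positivity), pow_split hef, ← mul_assoc,
    mul_lt_mul_iff_left₀ (by positivity : (0:ℝ) < 2 ^ e)]
  exact_mod_cast Iff.rfl

lemma le1 {e f a b : ℕ} (hef : e ≤ f) :
    (a:ℝ) / 2 ^ e ≤ (b:ℝ) / 2 ^ f ↔ a * 2 ^ (f - e) ≤ b := by
  rw [div_le_div_iff₀ (by positivity) (by positivity), pow_split hef, ← mul_assoc,
    mul_le_mul_iff_left₀ (by positivity : (0:ℝ) < 2 ^ e)]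
  exact_mod_cast Iff.rfl

lemma le2 {e f a b : ℕ} (hef : e ≤ f) :
    (a:ℝ) / 2 ^ f ≤ (b:ℝ) / 2 ^ e ↔ a ≤ b * 2 ^ (f - e) := by
  rw [div_le_div_iff₀ (by positivity) (by positivity), pow_split hef, ← mul_assoc,
    mul_le_mul_iff_left₀ (by positivity : (0:ℝ) < 2 ^ e)]
  exact_mod_cast Iff.rfl

section Psi
variable (ψ : ℕ → ℝ → ℝ)
variable (hψ : ∀ j k : ℕ, 1 ≤ j → 1 ≤ k → k ≤ 2 ^ (j - 1) → ∀ x : ℝ,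
      ψ (2 ^ (j - 1) + k) x =
        hatLam ((2 : ℝ) ^ (j - 1) * Int.fract x - (k : ℝ) + 1))

include hψ in
lemma psi_eq {m : ℕ} (hm : 2 ≤ m) (x : ℝ) :
    ψ m x = hatLam ((2:ℝ) ^ L m * Int.fract x - (K m : ℝ) + 1) := by
  have h := hψ (L m + 1) (K m) (by omega) (K_pos hm)
    (by simpa using K_le hm) x
  simpa [Nat.succ_sub_one, LK_sum hm] using h

include hψ in
lemma supp {m : ℕ} (hm : 2 ≤ m) {x : ℝ} (hx : x ∈ Set.Ico (0:ℝ) 1) :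
    ψ m x ≠ 0 ↔ ((K m - 1 : ℕ):ℝ) / 2 ^ L m < x ∧ x < ((K m : ℕ):ℝ) / 2 ^ L m := by
  rw [psi_eq ψ hψ hm, hatLam_ne]
  have hfr : Int.fract x = x := Int.fract_eq_self.mpr ⟨hx.1, hx.2⟩
  rw [hfr]
  have hp : (0:ℝ) < 2 ^ L m := by positivity
  have hc : ((K m - 1 : ℕ):ℝ) = (K m : ℝ) - 1 := by
    have := K_pos hm; push_cast [Nat.cast_sub this]; ring
  rw [hc, div_lt_iff₀ hp, lt_div_iff₀ hp]
  constructor <;> rintro ⟨a, b⟩ <;> constructor <;> nlinarith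

end Psi

/-- the overlap condition for `2 ≤ l ≤ l'`. -/
def C (l l' : ℕ) : Prop :=
  (K l - 1) * 2 ^ (L l' - L l) < K l' ∧ K l' ≤ K l * 2 ^ (L l' - L l)

instance : ∀ l l', Decidable (C l l') := fun _ _ => by unfold C; infer_instance

/-- midpoint of the support interval. -/
noncomputable def mid (m : ℕ) : ℝ :=
  (((K m - 1 : ℕ):ℝ) / 2 ^ L m + ((K m : ℕ):ℝ) / 2 ^ L m) / 2

lemma mid_mem {m : ℕ} (hm : 2 ≤ m) :
    mid m ∈ Set.Ico (0:ℝ) 1 ∧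
      ((K m - 1 : ℕ):ℝ) / 2 ^ L m < mid m ∧ mid m < ((K m : ℕ):ℝ) / 2 ^ L m := by
  have hp : (0:ℝ) < 2 ^ L m := by positivity
  have hlt : ((K m - 1 : ℕ):ℝ) < ((K m : ℕ):ℝ) := by
    exact_mod_cast (by have := K_pos hm; omega : K m - 1 < K m)
  have hab : ((K m - 1 : ℕ):ℝ) / 2 ^ L m < ((K m : ℕ):ℝ) / 2 ^ L m := by gcongr
  have h1 : ((K m - 1 : ℕ):ℝ) / 2 ^ L m < mid m := (left_lt_add_div_two).mpr hab
  have h2 : mid m < ((K m : ℕ):ℝ) / 2 ^ L m := (add_div_two_lt_right).mpr hab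
  have hb1 : ((K m : ℕ):ℝ) / 2 ^ L m ≤ 1 := by
    rw [div_le_one hp]
    exact_mod_cast (by simpa using K_le hm : (K m : ℕ) ≤ 2 ^ L m)
  have ha0 : (0:ℝ) ≤ ((K m - 1 : ℕ):ℝ) / 2 ^ L m := by positivity
  exact ⟨⟨le_of_lt (lt_of_le_of_lt ha0 h1), lt_of_lt_of_le h2 hb1⟩, h1, h2⟩

section Psi2
variable (ψ : ℕ → ℝ → ℝ)
variable (hψ : ∀ j k : ℕ, 1 ≤ j → 1 ≤ k → k ≤ 2 ^ (j - 1) → ∀ x : ℝ,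
      ψ (2 ^ (j - 1) + k) x =
        hatLam ((2 : ℝ) ^ (j - 1) * Int.fract x - (k : ℝ) + 1))

include hψ in
lemma cond_iff {l l' : ℕ} (h2 : 2 ≤ l) (hll : l ≤ l') :
    (∃ x ∈ Set.Ico (0:ℝ) 1, ψ l x * ψ l' x ≠ 0) ↔ C l l' := by
  have h2' : 2 ≤ l' := h2.trans hll
  have hLL : L l ≤ L l' := L_mono hll
  constructor
  · rintro ⟨x, hx, hne⟩
    have hl := (supp ψ hψ h2 hx).mp fun h => hne (by rw [h, zero_mul])
    have hl' := (supp ψ hψ h2' hx).mp fun h => hne (by rw [h, mul_zero])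
    constructor
    · exact (lt1 hLL).mp (hl.1.trans hl'.2)
    · have := (lt2 hLL).mp (hl'.1.trans hl.2)
      have hk := K_pos h2'
      omega
  · rintro ⟨c1, c2⟩
    have hk := K_pos h2'
    have hk1 := K_pos h2
    obtain ⟨hmem, hm1, hm2⟩ := mid_mem h2'
    refine ⟨mid l', hmem, ?_⟩
    have hl' : ψ l' (mid l') ≠ 0 := (supp ψ hψ h2' hmem).mpr ⟨hm1, hm2⟩
    have hl : ψ l (mid l') ≠ 0 := by
      rw [supp ψ hψ h2 hmem]
      constructor
      · calc ((K l - 1 : ℕ):ℝ) / 2 ^ L l ≤ ((K l' - 1 : ℕ):ℝ) / 2 ^ L l' :=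
              (le1 hLL).mpr (by omega)
          _ < mid l' := hm1
      · calc mid l' < ((K l' : ℕ):ℝ) / 2 ^ L l' := hm2
          _ ≤ ((K l : ℕ):ℝ) / 2 ^ L l := (le2 hLL).mpr c2
    exact mul_ne_zero hl hl'

include hψ in
lemma one_pair {l' : ℕ} (h1 : 1 ≤ l') (hψ1 : ∀ x : ℝ, ψ 1 x = 1) :
    ∃ x ∈ Set.Ico (0:ℝ) 1, ψ 1 x * ψ l' x ≠ 0 := by
  rcases eq_or_lt_of_le h1 with h | h
  · exact ⟨0, by simp, by rw [← h, hψ1]; norm_num⟩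
  · have h2' : 2 ≤ l' := h
    obtain ⟨hmem, hm1, hm2⟩ := mid_mem h2'
    refine ⟨mid l', hmem, ?_⟩
    rw [hψ1, one_mul]
    exact (supp ψ hψ h2' hmem).mpr ⟨hm1, hm2⟩

end Psi2

/-- ceiling division: the unique position at depth `e` whose interval contains that of `k'`. -/
def anc (δ k' : ℕ) : ℕ := (k' + 2 ^ δ - 1) / 2 ^ δ

lemma anc_spec {δ k' : ℕ} (h1 : 1 ≤ k') :
    1 ≤ anc δ k' ∧ (anc δ k' - 1) * 2 ^ δ < k' ∧ k' ≤ anc δ k' * 2 ^ δ := by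
  have hp : 0 < 2 ^ δ := Nat.pow_pos (by norm_num)
  set p := 2 ^ δ with hpdef
  have h1k : 1 ≤ anc δ k' := (Nat.one_le_div_iff hp).mpr (by omega)
  obtain ⟨t, ht⟩ : ∃ t, anc δ k' = t + 1 := ⟨anc δ k' - 1, by omega⟩
  have hdm := Nat.div_add_mod (k' + p - 1) p
  have hmod : (k' + p - 1) % p < p := Nat.mod_lt _ hp
  rw [show (k' + p - 1) / p = anc δ k' from rfl, ht] at hdm
  have hexp : p * (t + 1) = t * p + p := by ring
  rw [hexp] at hdm
  refine ⟨h1k, ?_, ?_⟩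
  · rw [ht]; simpa using (by omega : t * p < k')
  · rw [ht]; have : (t + 1) * p = t * p + p := by ring
    omega

lemma anc_le {δ k' E : ℕ} (h2 : k' ≤ 2 ^ (E + δ)) : anc δ k' ≤ 2 ^ E := by
  have hp : 0 < 2 ^ δ := Nat.pow_pos (by norm_num)
  have hE : 2 ^ (E + δ) = 2 ^ δ * 2 ^ E := by rw [pow_add]; ring
  rw [hE] at h2
  rw [anc, Nat.div_le_iff_le_mul_add_pred hp]
  omega

lemma cond_unique {δ k' k1 k2 : ℕ} (hk1 : 1 ≤ k1) (hk2 : 1 ≤ k2)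
    (h1 : (k1 - 1) * 2 ^ δ < k' ∧ k' ≤ k1 * 2 ^ δ)
    (h2 : (k2 - 1) * 2 ^ δ < k' ∧ k' ≤ k2 * 2 ^ δ) : k1 = k2 := by
  by_contra hne
  rcases Nat.lt_or_ge k1 k2 with h | h
  · have : (k2 - 1) * 2 ^ δ < k1 * 2 ^ δ := lt_of_lt_of_le h2.1 h1.2
    have := Nat.lt_of_mul_lt_mul_right this
    omega
  · rcases Nat.lt_or_ge k2 k1 with h' | h'
    · have : (k1 - 1) * 2 ^ δ < k2 * 2 ^ δ := lt_of_lt_of_le h1.1 h2.2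
      have := Nat.lt_of_mul_lt_mul_right this
      omega
    · omega

/-- the membership predicate for our pair set. -/
def P (l l' : ℕ) : Prop := l ≤ l' ∧ (l = 1 ∨ C l l')

instance : ∀ l l', Decidable (P l l') := fun _ _ => by unfold P; infer_instance

/-- the `l` of depth `e` overlapping `b`: `φ b 0 = 1`, `φ b (d+1)` is the ancestor
of `b` at depth `d`. -/
def φ (b e : ℕ) : ℕ := if e = 0 then 1 else 2 ^ (e - 1) + anc (L b - (e - 1)) (K b)

lemma phi_succ_spec {b d : ℕ} (h2 : 2 ≤ b) (hd : d ≤ L b) :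
    1 ≤ anc (L b - d) (K b) ∧ anc (L b - d) (K b) ≤ 2 ^ d ∧
      L (φ b (d + 1)) = d ∧ K (φ b (d + 1)) = anc (L b - d) (K b) ∧
      C (φ b (d + 1)) b ∧ φ b (d + 1) ≤ b := by
  have hKb : 1 ≤ K b := K_pos h2
  set δ := L b - d with hδ
  set k₀ := anc δ (K b) with hk₀
  obtain ⟨ha1, ha2, ha3⟩ := anc_spec (δ := δ) hKb
  have hkle : k₀ ≤ 2 ^ d := anc_le (by rw [show d + δ = L b by omega]; exact K_le h2)
  have hφ : φ b (d + 1) = 2 ^ d + k₀ := by simp [φ, hk₀, hδ]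
  obtain ⟨hL, hK⟩ := LK_eq ha1 hkle
  refine ⟨ha1, hkle, by rw [hφ]; exact hL, by rw [hφ]; exact hK, ?_, ?_⟩
  · rw [hφ]
    exact ⟨by rw [hK, hL, ← hδ]; exact ha2, by rw [hK, hL, ← hδ]; exact ha3⟩
  · rw [hφ]
    rcases eq_or_lt_of_le hd with h | h
    · have hδ0 : δ = 0 := by omega
      have : k₀ = K b := by rw [hk₀, hδ0]; simp [anc]
      rw [this, h]
      exact le_of_eq (LK_sum h2)
    · have h1 : 2 ^ (d + 1) ≤ 2 ^ L b := Nat.pow_le_pow_right (by norm_num) h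
      have h2' : 2 ^ L b ≤ b - 1 := (L_bounds h2).1
      have h3 : 2 ^ (d + 1) = 2 * 2 ^ d := by rw [pow_succ]; ring
      omega

lemma phi_strictmono {b : ℕ} (h2 : 2 ≤ b) :
    ∀ e f, e < f → f < L b + 2 → φ b e < φ b f := by
  intro e f hef hf
  obtain ⟨d, rfl⟩ : ∃ d, f = d + 1 := ⟨f - 1, by omega⟩
  have hd : d ≤ L b := by omega
  obtain ⟨ha1, ha2, -, -, -, -⟩ := phi_succ_spec h2 hd
  have hφf : φ b (d + 1) = 2 ^ d + anc (L b - d) (K b) := by simp [φ]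
  rcases Nat.eq_zero_or_pos e with rfl | he
  · have h1 : 1 ≤ 2 ^ d := Nat.one_le_two_pow
    rw [show φ b 0 = 1 from by simp [φ], hφf]
    omega
  · obtain ⟨c, rfl⟩ : ∃ c, e = c + 1 := ⟨e - 1, by omega⟩
    have hc : c ≤ L b := by omega
    obtain ⟨-, hb2, -, -, -, -⟩ := phi_succ_spec h2 hc
    have hφe : φ b (c + 1) = 2 ^ c + anc (L b - c) (K b) := by simp [φ]
    have hcd : 2 ^ (c + 1) ≤ 2 ^ d := Nat.pow_le_pow_right (by norm_num) (by omega)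
    have h3 : 2 ^ (c + 1) = 2 * 2 ^ c := by rw [pow_succ]; ring
    omega

lemma fiber_eq {N b : ℕ} (hbN : b ≤ N) (h2 : 2 ≤ b) :
    (Finset.Icc 1 N).filter (fun l => P l b) = (Finset.range (L b + 2)).image (φ b) := by
  ext l
  simp only [Finset.mem_filter, Finset.mem_Icc, Finset.mem_image, Finset.mem_range]
  constructor
  · rintro ⟨⟨hl1, hlN⟩, hlb, hor⟩
    rcases hor with rfl | hC
    · exact ⟨0, by omega, rfl⟩
    · rcases Nat.eq_or_lt_of_le hl1 with h | hl2
      · exact ⟨0, by omega, by simp [φ, ← h]⟩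
      have hd : L l ≤ L b := L_mono hlb
      refine ⟨L l + 1, by omega, ?_⟩
      obtain ⟨ha1, -, -, hK, hCφ, -⟩ := phi_succ_spec h2 hd
      have hKl : K l = anc (L b - L l) (K b) := by
        refine cond_unique (K_pos hl2) ha1 ⟨hC.1, hC.2⟩ ?_
        obtain ⟨a1, a2, a3⟩ := anc_spec (δ := L b - L l) (K_pos h2)
        exact ⟨a2, a3⟩
      have hφ : φ b (L l + 1) = 2 ^ L l + anc (L b - L l) (K b) := by simp [φ]
      rw [hφ, ← hKl, LK_sum hl2]
  · rintro ⟨e, he, rfl⟩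
    rcases Nat.eq_zero_or_pos e with rfl | hpos
    · rw [show φ b 0 = 1 from by simp [φ]]
      exact ⟨⟨le_refl 1, by omega⟩, by omega, Or.inl rfl⟩
    · obtain ⟨d, rfl⟩ : ∃ d, e = d + 1 := ⟨e - 1, by omega⟩
      have hd : d ≤ L b := by omega
      obtain ⟨ha1, -, -, -, hCφ, hle⟩ := phi_succ_spec h2 hd
      have hφ : φ b (d + 1) = 2 ^ d + anc (L b - d) (K b) := by simp [φ]
      refine ⟨⟨by rw [hφ]; have : 1 ≤ 2 ^ d := Nat.one_le_two_pow; omega, hle.trans hbN⟩,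
        hle, Or.inr hCφ⟩

lemma fiber_card {N b : ℕ} (hbN : b ≤ N) (h2 : 2 ≤ b) :
    ((Finset.Icc 1 N).filter (fun l => P l b)).card = L b + 2 := by
  rw [fiber_eq hbN h2,
    Finset.card_image_of_injOn, Finset.card_range]
  intro e he f hf heq
  simp only [Finset.coe_range, Set.mem_Iio] at he hf
  rcases lt_trichotomy e f with h | h | h
  · exact absurd heq (Nat.ne_of_lt (phi_strictmono h2 e f h hf))
  · exact h
  · exact absurd heq.symm (Nat.ne_of_lt (phi_strictmono h2 f e h he))

lemma fiber_card_one {N : ℕ} (hN : 1 ≤ N) :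
    ((Finset.Icc 1 N).filter (fun l => P l 1)).card = 1 := by
  have : (Finset.Icc 1 N).filter (fun l => P l 1) = {1} := by
    ext l
    simp only [Finset.mem_filter, Finset.mem_Icc, Finset.mem_singleton]
    constructor
    · rintro ⟨⟨h1, -⟩, h2, -⟩; omega
    · rintro rfl; exact ⟨⟨le_refl 1, hN⟩, le_refl 1, Or.inl rfl⟩
  rw [this]; rfl

/-- the per-column count. -/
def g (b : ℕ) : ℕ := if b = 1 then 1 else L b + 2

lemma sum_g (n : ℕ) : ∑ b ∈ Finset.Icc 1 (2 ^ n), g b = 2 ^ n * n + 1 := by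
  induction n with
  | zero => simp [g]
  | succ n ih =>
    have hIoc : ∀ m : ℕ, Finset.Icc 1 m = Finset.Ioc 0 m := fun m => by
      rw [← Finset.Icc_add_one_left_eq_Ioc, zero_add]
    rw [hIoc] at ih ⊢
    have hsplit := Finset.sum_Ioc_consecutive g
      (by positivity : (0:ℕ) ≤ 2 ^ n)
      (Nat.pow_le_pow_right (by norm_num) (by omega) : 2 ^ n ≤ 2 ^ (n + 1))
    rw [← hsplit, ih]
    have hconst : ∀ b ∈ Finset.Ioc (2 ^ n) (2 ^ (n + 1)), g b = n + 2 := by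
      intro b hb
      rw [Finset.mem_Ioc] at hb
      have h1 : 1 ≤ 2 ^ n := Nat.one_le_two_pow
      have hb2 : b ≠ 1 := by omega
      have hLb : L b = n :=
        Nat.log_eq_of_pow_le_of_lt_pow (by omega) (by omega)
      simp [g, hb2, hLb]
    rw [Finset.sum_congr rfl hconst, Finset.sum_const, Nat.card_Ioc, smul_eq_mul]
    have h3 : 2 ^ (n + 1) = 2 * 2 ^ n := by rw [pow_succ]; ring
    have hcard : 2 ^ (n + 1) - 2 ^ n = 2 ^ n := by omega
    rw [hcard, h3]
    ring

end Stmt13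

open Stmt13 in
theorem stmt13 (ψ : ℕ → ℝ → ℝ)
    (hψ1 : ∀ x : ℝ, ψ 1 x = 1)
    (hψ : ∀ j k : ℕ, 1 ≤ j → 1 ≤ k → k ≤ 2 ^ (j - 1) → ∀ x : ℝ,
      ψ (2 ^ (j - 1) + k) x =
        hatLam ((2 : ℝ) ^ (j - 1) * Int.fract x - (k : ℝ) + 1))
    (j : ℕ) (hj : 1 ≤ j) :
    Set.ncard {p : ℕ × ℕ | 1 ≤ p.1 ∧ p.1 ≤ p.2 ∧ p.2 ≤ 2 ^ (j - 1) ∧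
        ∃ x ∈ Set.Ico (0 : ℝ) 1, ψ p.1 x * ψ p.2 x ≠ 0} =
      2 ^ (j - 1) * (j - 1) + 1 := by
  classical
  set n := j - 1 with hn
  set N := 2 ^ n with hNdef
  have hN1 : 1 ≤ N := Nat.one_le_two_pow
  have hset : {p : ℕ × ℕ | 1 ≤ p.1 ∧ p.1 ≤ p.2 ∧ p.2 ≤ N ∧
        ∃ x ∈ Set.Ico (0 : ℝ) 1, ψ p.1 x * ψ p.2 x ≠ 0} =
      ↑((Finset.Icc 1 N ×ˢ Finset.Icc 1 N).filter (fun p => P p.1 p.2)) := by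
    ext ⟨u, v⟩
    simp only [Set.mem_setOf_eq, Finset.coe_filter, Finset.mem_product, Finset.mem_Icc]
    constructor
    · rintro ⟨h1, h2, h3, hE⟩
      refine ⟨⟨⟨h1, by omega⟩, ⟨by omega, h3⟩⟩, h2, ?_⟩
      rcases Nat.eq_or_lt_of_le h1 with h | h
      · exact Or.inl h.symm
      · exact Or.inr ((cond_iff ψ hψ h h2).mp hE)
    · rintro ⟨⟨⟨h1, huN⟩, hv1, h3⟩, h2, hor⟩
      refine ⟨h1, h2, h3, ?_⟩
      rcases hor with rfl | hC
      · exact one_pair ψ hψ hv1 hψ1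
      · rcases Nat.eq_or_lt_of_le h1 with h | h
        · rw [← h]; exact one_pair ψ hψ hv1 hψ1
        · exact (cond_iff ψ hψ h h2).mpr hC
  rw [hset, Set.ncard_coe_finset]
  have hfib : ((Finset.Icc 1 N ×ˢ Finset.Icc 1 N).filter (fun p => P p.1 p.2)).card
      = ∑ b ∈ Finset.Icc 1 N, ((Finset.Icc 1 N).filter (fun l => P l b)).card := by
    rw [Finset.card_eq_sum_card_fiberwise
      (f := fun p : ℕ × ℕ => p.2) (t := Finset.Icc 1 N)
      (fun p hp => by
        simp only [Finset.mem_coe, Finset.mem_filter, Finset.mem_product] at hp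
        exact hp.1.2)]
    refine Finset.sum_congr rfl fun b hb => ?_
    rw [Finset.mem_Icc] at hb
    have himg : (((Finset.Icc 1 N ×ˢ Finset.Icc 1 N).filter (fun p => P p.1 p.2)).filter
        (fun p => p.2 = b))
        = ((Finset.Icc 1 N).filter (fun l => P l b)).image (fun l => (l, b)) := by
      ext ⟨u, v⟩
      simp only [Finset.mem_filter, Finset.mem_product, Finset.mem_Icc, Finset.mem_image]
      constructor
      · rintro ⟨⟨⟨hu, hv⟩, hP⟩, rfl⟩
        exact ⟨u, ⟨hu, hP⟩, rfl⟩
      · rintro ⟨l, ⟨hl, hP⟩, heq⟩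
        obtain ⟨rfl, rfl⟩ := Prod.mk.inj heq
        exact ⟨⟨⟨hl, hb⟩, hP⟩, rfl⟩
    rw [himg, Finset.card_image_of_injective _ (fun a a' h => (Prod.ext_iff.mp h).1)]
  rw [hfib]
  have hsum : ∑ b ∈ Finset.Icc 1 N, ((Finset.Icc 1 N).filter (fun l => P l b)).card
      = ∑ b ∈ Finset.Icc 1 N, g b := by
    refine Finset.sum_congr rfl fun b hb => ?_
    rw [Finset.mem_Icc] at hb
    rcases Nat.eq_or_lt_of_le hb.1 with h | h
    · rw [← h, fiber_card_one hN1]; rfl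
    · rw [fiber_card hb.2 h, g, if_neg (by omega)]
  rw [hsum, sum_g]
end
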